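/- Let C be an (n,k,r) LRC code such that s := n mod (r+1) satisfies s ∉ {0,1}, and suppose C has m := ⌊n/(r+1)⌋ + 1 pairwise disjoint repair groups A_1,...,A_m with |A_i| = r+1 for i < m and |A_m| = s (each A_i being a repair group means each coordinate in A_i is a function of the other coordinates of A_i restricted to codewords). If either r | k, or (r ∤ k and k mod r ≥ s), then d_min(C) ≤ n - k - ⌈k/r⌉ + 1. -/

import Mathlib

/-- Arithmetic core: properties of `t = ⌈k/r⌉ = (k+r-1)/r`. -/
private lemma lrc_arith {k r s D : ℕ} (hk : 0 < k) (hr : 0 < r) (hs2 : 2 ≤ s) (hsr : s ≤ r)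
    (hK : k + 1 ≤ r * D + s)
    (hcase : r ∣ k ∨ (¬ r ∣ k ∧ s ≤ k % r)) :
    1 ≤ (k + r - 1) / r ∧ (k + r - 1) / r ≤ D ∧
      r * ((k + r - 1) / r - 1) + s ≤ k ∧ k ≤ r * ((k + r - 1) / r) := by
  set t := (k + r - 1) / r with ht
  have hdm := Nat.div_add_mod (k + r - 1) r
  have hmod := Nat.mod_lt (k + r - 1) hr
  rw [← ht] at hdm
  have h1 : r * t ≤ k + r - 1 := by omega
  have h2 : k + r - 1 < r * t + r := by omega
  have hkle : k ≤ r * t := by omega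
  have ht1 : 1 ≤ t := by
    rw [ht, Nat.one_le_div_iff hr]; omega
  have hrt1 : r * (t - 1) + r = r * t := by
    conv_rhs => rw [show t = (t - 1) + 1 by omega]
    rw [Nat.mul_add, Nat.mul_one]
  rcases hcase with ⟨c, hc⟩ | ⟨hnd, hks⟩
  · -- k = r * c
    have hc1 : 1 ≤ c := by
      rcases Nat.eq_zero_or_pos c with h | h
      · subst h; omega
      · exact h
    have hct : t = c := by
      have hlt : r * t < r * (c + 1) := by rw [Nat.mul_add]; omega
      have h1' : t < c + 1 := Nat.lt_of_mul_lt_mul_left hlt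
      have hlt2 : r * c < r * (t + 1) := by rw [Nat.mul_add]; omega
      have h2' : c < t + 1 := Nat.lt_of_mul_lt_mul_left hlt2
      omega
    have hcD : c ≤ D := by
      have hlt : r * c < r * (D + 1) := by rw [Nat.mul_add]; omega
      have := Nat.lt_of_mul_lt_mul_left hlt
      omega
    refine ⟨ht1, by omega, ?_, hkle⟩
    -- r * (t-1) + s ≤ k
    have : r * (c - 1) + r = r * c := by
      conv_rhs => rw [show c = (c - 1) + 1 by omega]
      rw [Nat.mul_add, Nat.mul_one]
    rw [hct]
    omega
  · -- k = r * c + ρ, 0 < ρ < r, s ≤ ρ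
    have hdm2 := Nat.div_add_mod k r
    set c := k / r with hcdef
    set ρ := k % r with hρdef
    have hρpos : 0 < ρ := Nat.pos_of_ne_zero fun h => hnd (Nat.dvd_of_mod_eq_zero h)
    have hρlt : ρ < r := Nat.mod_lt k hr
    have hct : t = c + 1 := by
      have hlt : r * t < r * (c + 2) := by rw [Nat.mul_add]; omega
      have h1' : t < c + 2 := Nat.lt_of_mul_lt_mul_left hlt
      have hlt2 : r * (c + 1) < r * (t + 1) := by rw [Nat.mul_add, Nat.mul_add]; omega
      have h2' : c + 1 < t + 1 := Nat.lt_of_mul_lt_mul_left hlt2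
      omega
    have hcD : c + 1 ≤ D := by
      have hlt : r * c < r * D := by omega
      have := Nat.lt_of_mul_lt_mul_left hlt
      omega
    refine ⟨ht1, by omega, ?_, hkle⟩
    have : t - 1 = c := by omega
    rw [this]
    omega

set_option maxHeartbeats 1000000 in
/-- Strengthened Singleton-type bound: if an `(n,k,r)` LRC code with
`s = n mod (r+1) ∉ {0,1}` has `m = ⌊n/(r+1)⌋ + 1` pairwise disjoint repair
groups, the first `m-1` of size `r+1` and the last of size `s`, and either
`r ∣ k` or (`r ∤ k` and `k mod r ≥ s`), then `d_min ≤ n - k - ⌈k/r⌉ + 1`. -/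
theorem lrc_strengthened_singleton_bound
    {α : Type*} [Fintype α] [DecidableEq α] {n k r q s m : ℕ} (hk : 0 < k) (hr : 0 < r)
    (hq : Fintype.card α = q)
    (hs : s = n % (r + 1)) (hs2 : 2 ≤ s) (hm : m = n / (r + 1) + 1)
    (C : Finset (Fin n → α)) (hcard : C.card = q ^ k)
    (hloc : ∀ i : Fin n, ∃ I : Finset (Fin n), i ∉ I ∧ I.card = r ∧
      ∀ c ∈ C, ∀ c' ∈ C, (∀ j ∈ I, c j = c' j) → c i = c' i)
    (A : Fin m → Finset (Fin n))
    (hdisj : ∀ i j : Fin m, i ≠ j → Disjoint (A i) (A j))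
    (hAcard : ∀ i : Fin m, (i : ℕ) < m - 1 → (A i).card = r + 1)
    (hAlast : ∀ i : Fin m, (i : ℕ) = m - 1 → (A i).card = s)
    (hrepair : ∀ j : Fin m, ∀ i ∈ A j, ∀ c ∈ C, ∀ c' ∈ C,
      (∀ l ∈ A j, l ≠ i → c l = c' l) → c i = c' i)
    (hcase : r ∣ k ∨ (¬ r ∣ k ∧ s ≤ k % r))
    (hC2 : 1 < C.card)
    (d : ℕ) (hd : ∀ c ∈ C, ∀ c' ∈ C, c ≠ c' → d ≤ hammingDist c c') :
    (d : ℤ) ≤ (n : ℤ) - (k : ℤ) - ⌈(k : ℚ) / (r : ℚ)⌉ + 1 := by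
  classical
  -- q ≥ 2
  have hq2 : 2 ≤ q := by
    by_contra h
    push_neg at h
    have h1 : q ^ k ≤ 1 ^ k := Nat.pow_le_pow_left (by omega) k
    rw [one_pow] at h1
    rw [hcard] at hC2
    omega
  have hsr : s ≤ r := by
    have := Nat.mod_lt n (show 0 < r + 1 by omega)
    omega
  have hD : n = (r + 1) * (n / (r + 1)) + s := by
    rw [hs]; exact (Nat.div_add_mod n (r + 1)).symm
  set D := n / (r + 1) with hDdef
  have hmD : m = D + 1 := hm
  -- each group is nonempty; pick a designated element in each
  have hAne : ∀ j : Fin m, (A j).Nonempty := by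
    intro j
    have hj := j.isLt
    rcases lt_or_eq_of_le (show (j : ℕ) ≤ m - 1 by omega) with h | h
    · have := hAcard j h
      exact Finset.card_pos.mp (by omega)
    · have := hAlast j h
      exact Finset.card_pos.mp (by omega)
  choose e he using hAne
  have he_inj : Function.Injective e := by
    intro j j' hjj'
    by_contra hne
    exact (Finset.disjoint_left.mp (hdisj j j' hne) (he j)) (hjj' ▸ he j')
  -- repair extension: agreement off the designated element gives agreement on the group
  have hext : ∀ (j : Fin m), ∀ c ∈ C, ∀ c' ∈ C,
      (∀ l ∈ A j, l ≠ e j → c l = c' l) → ∀ i ∈ A j, c i = c' i := by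
    intro j c hc c' hc' hagree i hi
    by_cases hie : i = e j
    · subst hie
      exact hrepair j _ hi c hc c' hc' fun l hl hlne => hagree l hl hlne
    · exact hagree i hi hie
  -- global counting: k + m ≤ n
  have hglobal : k + m ≤ n := by
    set E : Finset (Fin n) := Finset.univ.image e with hE
    set F0 : Finset (Fin n) := Finset.univ \ E with hF0
    have hEcard : E.card = m := by
      rw [hE, Finset.card_image_of_injective _ he_inj, Finset.card_univ, Fintype.card_fin]
    have hF0card : F0.card = n - m := by
      rw [hF0, Finset.card_sdiff_of_subset (Finset.subset_univ E), Finset.card_univ, Fintype.card_fin,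
        hEcard]
    have hmn : m ≤ n := by
      have := Finset.card_le_univ E
      rw [hEcard, Fintype.card_fin] at this
      exact this
    have hinj : Set.InjOn (fun c : Fin n → α => (fun j : F0 => c j.1)) ↑C := by
      intro c hc c' hc' hcc'
      have hagreeF0 : ∀ l ∈ F0, c l = c' l := fun l hl => congrFun hcc' ⟨l, hl⟩
      funext i
      by_cases hiE : i ∈ E
      · obtain ⟨j, -, rfl⟩ := Finset.mem_image.mp hiE
        refine hext j c hc c' hc' ?_ (e j) (he j)
        intro l hl hlne
        apply hagreeF0
        rw [hF0, Finset.mem_sdiff]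
        refine ⟨Finset.mem_univ _, ?_⟩
        rw [hE, Finset.mem_image]
        rintro ⟨j', -, rfl⟩
        by_cases hjj : j' = j
        · exact hlne (by rw [hjj])
        · exact (Finset.disjoint_left.mp (hdisj j' j hjj) (he j')) hl
      · exact hagreeF0 i (by rw [hF0, Finset.mem_sdiff]; exact ⟨Finset.mem_univ _, hiE⟩)
    have hle := Finset.card_le_card_of_injOn (t := (Finset.univ : Finset (↥F0 → α)))
      (fun c : Fin n → α => (fun j : F0 => c j.1)) (fun a _ => Finset.mem_univ _) hinj
    rw [Finset.card_univ, hcard] at hle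
    have hcardfun : Fintype.card (↥F0 → α) = q ^ (n - m) := by
      rw [Fintype.card_fun, hq, Fintype.card_coe, hF0card]
    rw [hcardfun] at hle
    have := (Nat.pow_le_pow_iff_right (by omega : 1 < q)).mp hle
    omega
  have hK1 : k + 1 ≤ r * D + s := by
    have hexp : (r + 1) * D = r * D + D := by ring
    omega
  -- the ceiling t and derived quantities
  set t := (k + r - 1) / r with htdef
  obtain ⟨ht1, htD, hts, hkle⟩ := lrc_arith hk hr hs2 hsr hK1 hcase
  rw [← htdef] at ht1 htD hts hkle
  set a := t - 1 with hadef
  have har : r * a + r = r * t := by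
    conv_rhs => rw [show t = a + 1 by omega]
    rw [Nat.mul_add, Nat.mul_one]
  set b := k - s - r * a with hbdef
  have hb_le : b ≤ r := by omega
  have hb_eq : r * a + s + b = k := by omega
  have hm2 : 2 ≤ m := by omega
  have ham2 : a ≤ m - 2 := by omega
  -- index sets
  have hamle : a ≤ m := by omega
  set jlast : Fin m := ⟨m - 1, by omega⟩ with hjlast
  set ja : Fin m := ⟨a, by omega⟩ with hja
  have hjlv : (jlast : ℕ) = m - 1 := rfl
  have hjav : (ja : ℕ) = a := rfl
  set J : Finset (Fin m) := Finset.map (Fin.castLEEmb hamle) Finset.univ with hJ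
  have hJmem : ∀ j : Fin m, j ∈ J ↔ (j : ℕ) < a := by
    intro j
    rw [hJ, Finset.mem_map]
    constructor
    · rintro ⟨i, -, rfl⟩; exact i.isLt
    · intro hja'
      exact ⟨⟨(j : ℕ), hja'⟩, Finset.mem_univ _, by ext; rfl⟩
  have hJcard : J.card = a := by
    rw [hJ, Finset.card_map, Finset.card_univ, Fintype.card_fin]
  have hjlastJ : jlast ∉ J := by
    rw [hJmem]; simp only [hjlast]; omega
  have hjaJ : ja ∉ J := by
    rw [hJmem]; simp only [hja]; omega
  have hjajlast : ja ≠ jlast := by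
    intro h
    have : a = m - 1 := congrArg Fin.val h
    omega
  -- choose b elements from group ja
  have hjacard : (A ja).card = r + 1 := hAcard ja (by simp only [hja]; omega)
  obtain ⟨B, hBsub, hBcard⟩ := Finset.exists_subset_card_eq (s := A ja) (n := b) (by omega)
  -- the set S
  set S : Finset (Fin n) := A jlast ∪ J.biUnion A ∪ B with hS
  have hd1 : Disjoint (A jlast) (J.biUnion A) := by
    rw [Finset.disjoint_biUnion_right]
    intro j hj
    apply hdisj
    intro h
    have h1 := (hJmem j).mp hj
    have h2 : (jlast : ℕ) = (j : ℕ) := congrArg Fin.val h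
    omega
  have hd2 : Disjoint (A jlast ∪ J.biUnion A) B := by
    rw [Finset.disjoint_union_left]
    constructor
    · exact (hdisj jlast ja (Ne.symm hjajlast)).mono_right hBsub
    · rw [Finset.disjoint_biUnion_left]
      intro j hj
      refine (hdisj j ja ?_).mono_right hBsub
      intro h
      rw [h] at hj
      exact hjaJ hj
  have hbiUcard : (J.biUnion A).card = a * (r + 1) := by
    rw [Finset.card_biUnion (fun x hx y hy hxy => hdisj x y hxy)]
    rw [Finset.sum_congr rfl (fun j hj => hAcard j (by rw [hJmem] at hj; omega))]
    rw [Finset.sum_const, hJcard, smul_eq_mul]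
  have hScard : S.card = k + a := by
    rw [hS, Finset.card_union_of_disjoint hd2, Finset.card_union_of_disjoint hd1,
      hAlast jlast rfl, hbiUcard, hBcard]
    have : a * (r + 1) = r * a + a := by ring
    omega
  -- the designated elements inside S
  set Dset : Finset (Fin n) := insert (e jlast) (J.image e) with hDset
  have hDsub : Dset ⊆ S := by
    intro i hi
    rw [hDset, Finset.mem_insert] at hi
    rcases hi with rfl | hi
    · rw [hS]; exact Finset.mem_union_left _ (Finset.mem_union_left _ (he jlast))
    · obtain ⟨j, hj, rfl⟩ := Finset.mem_image.mp hi
      rw [hS]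
      exact Finset.mem_union_left _ (Finset.mem_union_right _
        (Finset.mem_biUnion.mpr ⟨j, hj, he j⟩))
  have hDcard : Dset.card = a + 1 := by
    rw [hDset, Finset.card_insert_of_notMem, Finset.card_image_of_injective _ he_inj, hJcard]
    intro hmem
    obtain ⟨j, hj, hje⟩ := Finset.mem_image.mp hmem
    exact hjlastJ (he_inj hje ▸ hj)
  set F : Finset (Fin n) := S \ Dset with hF
  have hFcard : F.card = k - 1 := by
    rw [hF, Finset.card_sdiff_of_subset hDsub, hScard, hDcard]
    omega
  -- pigeonhole: two codewords agree on F
  have hcardfun : (Finset.univ : Finset (↥F → α)).card = q ^ (k - 1) := by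
    rw [Finset.card_univ, Fintype.card_fun, hq, Fintype.card_coe, hFcard]
  obtain ⟨c, hc, c', hc', hne, hfeq⟩ :=
    Finset.exists_ne_map_eq_of_card_lt_of_maps_to
      (t := (Finset.univ : Finset (↥F → α)))
      (f := fun c : Fin n → α => (fun j : F => c j.1))
      (by rw [hcardfun, hcard]
          exact Nat.pow_lt_pow_right (by omega : 1 < q) (by omega))
      (fun a _ => Finset.mem_univ _)
  have hagreeF : ∀ l ∈ F, c l = c' l := fun l hl => congrFun hfeq ⟨l, hl⟩
  -- agreement extends to all of S
  have hagreeS : ∀ i ∈ S, c i = c' i := by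
    -- a coordinate of S is either in F or is a designated element of a used group
    have key : ∀ j : Fin m, A j ⊆ S → ∀ i ∈ A j, c i = c' i := by
      intro j hjS
      apply hext j c hc c' hc'
      intro l hl hlne
      apply hagreeF
      rw [hF, Finset.mem_sdiff]
      refine ⟨hjS hl, ?_⟩
      rw [hDset, Finset.mem_insert]
      rintro (rfl | hmem)
      · -- l = e jlast : then l ∈ A jlast ∩ A j forces j = jlast, then l = e j, contradiction
        by_cases hjj : j = jlast
        · exact hlne (by rw [hjj])
        · exact (Finset.disjoint_left.mp (hdisj j jlast hjj) hl) (he jlast)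
      · obtain ⟨j', hj', rfl⟩ := Finset.mem_image.mp hmem
        by_cases hjj : j = j'
        · exact hlne (by rw [hjj])
        · exact (Finset.disjoint_left.mp (hdisj j j' hjj) hl) (he j')
    intro i hiS
    rw [hS, Finset.mem_union, Finset.mem_union] at hiS
    rcases hiS with (hi | hi) | hi
    · exact key jlast (by rw [hS]; exact fun x hx =>
        Finset.mem_union_left _ (Finset.mem_union_left _ hx)) i hi
    · obtain ⟨j, hj, hij⟩ := Finset.mem_biUnion.mp hi
      exact key j (fun x hx => by
        rw [hS]
        exact Finset.mem_union_left _ (Finset.mem_union_right _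
          (Finset.mem_biUnion.mpr ⟨j, hj, hx⟩))) i hij
    · -- i ∈ B ⊆ F directly
      apply hagreeF
      rw [hF, Finset.mem_sdiff]
      constructor
      · rw [hS]; exact Finset.mem_union_right _ hi
      · rw [hDset, Finset.mem_insert]
        rintro (rfl | hmem)
        · exact (Finset.disjoint_left.mp (hdisj ja jlast hjajlast) (hBsub hi)) (he jlast)
        · obtain ⟨j', hj', hje⟩ := Finset.mem_image.mp hmem
          have : ja ≠ j' := fun h => hjaJ (h ▸ hj')
          exact (Finset.disjoint_left.mp (hdisj ja j' this) (hBsub hi)) (hje ▸ he j')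
  -- Hamming distance bound
  have hham : hammingDist c c' ≤ n - S.card := by
    have : hammingDist c c' = (Finset.univ.filter fun i => c i ≠ c' i).card := rfl
    rw [this]
    calc (Finset.univ.filter fun i => c i ≠ c' i).card
        ≤ (Finset.univ \ S).card := by
          apply Finset.card_le_card
          intro i hi
          rw [Finset.mem_filter] at hi
          rw [Finset.mem_sdiff]
          exact ⟨Finset.mem_univ _, fun hiS => hi.2 (hagreeS i hiS)⟩
      _ = n - S.card := by
          rw [Finset.card_sdiff_of_subset (Finset.subset_univ S), Finset.card_univ, Fintype.card_fin]
  have hdn : d ≤ n - (k + a) := by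
    have := hd c hc c' hc' hne
    rw [hScard] at hham
    omega
  have hSn : k + a ≤ n := by
    have := Finset.card_le_univ S
    rw [hScard, Fintype.card_fin] at this
    exact this
  -- identify the ceiling with t
  have hceil : ⌈(k : ℚ) / (r : ℚ)⌉ = (t : ℤ) := by
    rw [Int.ceil_eq_iff]
    have hrpos : (0 : ℚ) < (r : ℚ) := by exact_mod_cast hr
    have hta : a + 1 = t := by omega
    have hk3 : a * r < k := by
      have h' : r * a < k := by omega
      rw [Nat.mul_comm]; exact h'
    have hk2 : k ≤ t * r := by rw [Nat.mul_comm]; exact hkle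
    constructor
    · rw [lt_div_iff₀ hrpos]
      calc ((t : ℚ) - 1) * r = ((a : ℕ) : ℚ) * ((r : ℕ) : ℚ) := by
            rw [← hta]; push_cast; ring
        _ < ((k : ℕ) : ℚ) := by exact_mod_cast hk3
    · rw [div_le_iff₀ hrpos]
      exact_mod_cast hk2
  rw [hceil]
  omega
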